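/- Let U be a uniform ultrafilter. Then the cofinality of the character of U is at least the depth of U: dp(U) ≤ cf(ch(U)). -/

import Mathlib

open Cardinal

/-- `A ⊆* B` : `A \ B` is bounded. -/
def AlmostSub {K : Type*} [LinearOrder K] (A B : Set K) : Prop := BddAbove (A \ B)

section Aux
open Set
open Set


section AS
variable {K : Type*} [LinearOrder K] [Nonempty K]

lemma almostSub_of_subset {A B : Set K} (h : A ⊆ B) : AlmostSub A B := by
  have : A \ B = ∅ := diff_eq_empty.2 h
  rw [AlmostSub, this]
  exact bddAbove_empty

omit [Nonempty K] in
lemma AlmostSub.mono {A A' B : Set K} (h : A' ⊆ A) (hAB : AlmostSub A B) : AlmostSub A' B :=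
  BddAbove.mono (diff_subset_diff_left h) hAB

omit [Nonempty K] in
lemma AlmostSub.trans {A B C : Set K} (h1 : AlmostSub A B) (h2 : AlmostSub B C) :
    AlmostSub A C := by
  have hsub : A \ C ⊆ (A \ B) ∪ (B \ C) := by
    intro x hx
    by_cases hb : x ∈ B
    · exact Or.inr ⟨hb, hx.2⟩
    · exact Or.inl ⟨hx.1, hb⟩
  exact (h1.union h2).mono hsub

end AS


lemma card_Iic_lt {c : Cardinal} (hc : Cardinal.aleph0 ≤ c) (i : c.ord.ToType) :
    #(Set.Iic i) < c := by
  have h1 : (Set.Iic i) ⊆ insert i (Set.Iio i) := by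
    intro x hx
    rcases eq_or_lt_of_le (Set.mem_Iic.mp hx) with h | h
    · exact Or.inl h
    · exact Or.inr h
  calc #(Set.Iic i) ≤ #(insert i (Set.Iio i) : Set _) := mk_le_mk_of_subset h1
    _ ≤ #(Set.Iio i) + 1 := mk_insert_le
    _ < c := Cardinal.add_lt_of_lt hc (Cardinal.mk_Iio_ord_toType i)
      (lt_of_lt_of_le Cardinal.one_lt_aleph0 hc)

lemma tail_mem_uniform {kappa : Cardinal} (hkappa : Cardinal.aleph0 ≤ kappa)
    (U : Ultrafilter kappa.ord.ToType) (huniform : ∀ X ∈ U, #X = kappa)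
    (c : kappa.ord.ToType) : Set.Ioi c ∈ U := by
  by_contra h
  have h2 : (Set.Ioi c)ᶜ ∈ U := Ultrafilter.compl_mem_iff_notMem.2 h
  rw [Set.compl_Ioi] at h2
  exact absurd (huniform _ h2) (card_Iic_lt hkappa c).ne


lemma kappa_lt_ch {kappa : Cardinal} (hkappa : Cardinal.aleph0 ≤ kappa)
    (U : Ultrafilter kappa.ord.ToType) (huniform : ∀ X ∈ U, #X = kappa)
    {ch : Cardinal}
    (hch : IsLeast {c : Cardinal | ∃ B : Set (Set kappa.ord.ToType),
      (∀ b ∈ B, b ∈ U) ∧ (∀ X ∈ U, ∃ b ∈ B, b ⊆ X) ∧ #B = c} ch) :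
    kappa < ch := by
  classical
  by_contra hcon
  push_neg at hcon
  obtain ⟨B, hBU, hBbase, hBcard⟩ := hch.1
  -- B is nonempty
  have hBne : Nonempty B := by
    obtain ⟨b, hb, -⟩ := hBbase Set.univ Filter.univ_mem
    exact ⟨⟨b, hb⟩⟩
  have hTne : Nonempty kappa.ord.ToType := by
    rw [Ordinal.toType_nonempty_iff_ne_zero]
    intro h0
    rw [Cardinal.ord_eq_zero] at h0
    rw [h0] at hkappa
    exact absurd hkappa (by simp [Cardinal.aleph0_ne_zero])
  -- surjection from kappa.ord.ToType onto B
  have hinj : #B ≤ #kappa.ord.ToType := by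
    rw [hBcard, Cardinal.mk_ord_toType]
    exact hcon
  obtain ⟨j⟩ := (Cardinal.le_def _ _).mp hinj
  let e : kappa.ord.ToType → B := Function.invFun j
  have hesurj : Function.Surjective e := Function.invFun_surjective j.injective
  let eb : kappa.ord.ToType → Set kappa.ord.ToType := fun α => (e α : Set kappa.ord.ToType)
  have hebU : ∀ α, eb α ∈ U := fun α => hBU _ (e α).2
  have hebcard : ∀ α, #(eb α) = kappa := fun α => huniform _ (hebU α)
  -- recursive choice of pairs
  let F : ∀ α : kappa.ord.ToType, (∀ β : kappa.ord.ToType, β < α → kappa.ord.ToType × kappa.ord.ToType) → kappa.ord.ToType × kappa.ord.ToType := fun α rec =>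
    if h : ∃ p : kappa.ord.ToType × kappa.ord.ToType, p.1 ∈ eb α ∧ p.2 ∈ eb α ∧ p.1 ≠ p.2 ∧
        ∀ β (hβ : β < α), p.1 ≠ (rec β hβ).1 ∧ p.1 ≠ (rec β hβ).2 ∧
          p.2 ≠ (rec β hβ).1 ∧ p.2 ≠ (rec β hβ).2
    then h.choose else Classical.arbitrary _
  let q : kappa.ord.ToType → kappa.ord.ToType × kappa.ord.ToType := (IsWellFounded.wf (r := ((· < ·) : kappa.ord.ToType → kappa.ord.ToType → Prop))).fix F
  have hq : ∀ α, q α = F α (fun β _ => q β) := fun α =>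
    WellFounded.fix_eq _ F α
  have cond : ∀ α : kappa.ord.ToType, ∃ p : kappa.ord.ToType × kappa.ord.ToType, p.1 ∈ eb α ∧ p.2 ∈ eb α ∧ p.1 ≠ p.2 ∧
      ∀ β (hβ : β < α), p.1 ≠ (q β).1 ∧ p.1 ≠ (q β).2 ∧
        p.2 ≠ (q β).1 ∧ p.2 ≠ (q β).2 := by
    intro α
    set V : Set kappa.ord.ToType := ((fun β => (q β).1) '' Set.Iio α) ∪ ((fun β => (q β).2) '' Set.Iio α)
      with hV
    have hVcard : #V < kappa := by
      have h1 : #((fun β => (q β).1) '' Set.Iio α) < kappa :=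
        lt_of_le_of_lt (Cardinal.mk_image_le) (Cardinal.mk_Iio_ord_toType α)
      have h2 : #((fun β => (q β).2) '' Set.Iio α) < kappa :=
        lt_of_le_of_lt (Cardinal.mk_image_le) (Cardinal.mk_Iio_ord_toType α)
      exact lt_of_le_of_lt (Cardinal.mk_union_le _ _) (Cardinal.add_lt_of_lt hkappa h1 h2)
    have hdiff : (2 : Cardinal) ≤ #(eb α \ V : Set kappa.ord.ToType) := by
      by_contra hlt
      push_neg at hlt
      have hsplit : #(eb α) ≤ #(eb α \ V : Set kappa.ord.ToType) + #V := by
        refine le_trans (Cardinal.mk_le_mk_of_subset ?_) (Cardinal.mk_union_le _ _)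
        intro x hx
        by_cases hxV : x ∈ V
        · exact Or.inr hxV
        · exact Or.inl ⟨hx, hxV⟩
      rw [hebcard α] at hsplit
      have : #(eb α \ V : Set kappa.ord.ToType) + #V < kappa :=
        Cardinal.add_lt_of_lt hkappa
          (lt_of_lt_of_le hlt (le_trans (le_of_lt (by exact_mod_cast Cardinal.nat_lt_aleph0 2)) hkappa)) hVcard
      exact absurd hsplit (not_le.2 this)
    obtain ⟨x, y, hxy⟩ := Cardinal.two_le_iff.mp hdiff
    refine ⟨(x.1, y.1), x.2.1, y.2.1, fun hxy' => hxy (Subtype.ext hxy'), ?_⟩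
    intro β hβ
    have hx1 : (x : kappa.ord.ToType) ∉ V := x.2.2
    have hy1 : (y : kappa.ord.ToType) ∉ V := y.2.2
    refine ⟨?_, ?_, ?_, ?_⟩
    · intro h; exact hx1 (Or.inl ⟨β, hβ, h.symm⟩)
    · intro h; exact hx1 (Or.inr ⟨β, hβ, h.symm⟩)
    · intro h; exact hy1 (Or.inl ⟨β, hβ, h.symm⟩)
    · intro h; exact hy1 (Or.inr ⟨β, hβ, h.symm⟩)
  have key : ∀ α : kappa.ord.ToType, (q α).1 ∈ eb α ∧ (q α).2 ∈ eb α ∧ (q α).1 ≠ (q α).2 ∧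
      ∀ β (hβ : β < α), (q α).1 ≠ (q β).1 ∧ (q α).1 ≠ (q β).2 ∧
        (q α).2 ≠ (q β).1 ∧ (q α).2 ≠ (q β).2 := by
    intro α
    have h := cond α
    have heq : q α = h.choose := by
      rw [hq α]
      simp only [F]
      rw [dif_pos h]
    rw [heq]
    exact h.choose_spec
  set A : Set kappa.ord.ToType := Set.range (fun α => (q α).1) with hA
  have hyA : ∀ α, (q α).2 ∉ A := by
    intro α hmem
    obtain ⟨β, hβ⟩ := hmem
    simp only at hβ
    rcases lt_trichotomy β α with h | h | h
    · exact ((key α).2.2.2 β h).2.2.1 hβ.symm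
    · subst h; exact (key β).2.2.1 hβ
    · exact ((key β).2.2.2 α h).2.1 hβ
  rcases U.mem_or_compl_mem A with hAU | hAU
  · obtain ⟨b, hbB, hbA⟩ := hBbase A hAU
    obtain ⟨α, hα⟩ := hesurj ⟨b, hbB⟩
    have h2 : (q α).2 ∈ eb α := (key α).2.1
    have hebb : eb α = b := congrArg Subtype.val hα
    rw [hebb] at h2
    exact hyA α (hbA h2)
  · obtain ⟨b, hbB, hbA⟩ := hBbase Aᶜ hAU
    obtain ⟨α, hα⟩ := hesurj ⟨b, hbB⟩
    have h1 : (q α).1 ∈ eb α := (key α).1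
    have hebb : eb α = b := congrArg Subtype.val hα
    rw [hebb] at h1
    exact hbA h1 (Set.mem_range_self α)


theorem stmt_14' (kappa : Cardinal) (hkappa : Cardinal.aleph0 ≤ kappa)
    (U : Ultrafilter kappa.ord.ToType)
    (huniform : ∀ X ∈ U, #X = kappa)
    (ch dp : Cardinal)
    (hch : IsLeast {c : Cardinal | ∃ B : Set (Set kappa.ord.ToType),
      (∀ b ∈ B, b ∈ U) ∧ (∀ X ∈ U, ∃ b ∈ B, b ⊆ X) ∧ #B = c} ch)
    (hdp : IsLeast {theta : Cardinal | theta.IsRegular ∧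
      ∃ B : theta.ord.ToType → Set kappa.ord.ToType, (∀ i, B i ∈ U) ∧
        (∀ i j : theta.ord.ToType, i < j → AlmostSub (B j) (B i)) ∧
        ¬ ∃ P ∈ U, ∀ i, AlmostSub P (B i)} dp)
    (card_Iic_lt : ∀ i : ch.ord.ToType, #(Set.Iic i) < ch)
    (tail_mem_uniform : ∀ c : kappa.ord.ToType, Set.Ioi c ∈ U)
    (hk : kappa < ch) :
    dp ≤ ch.ord.cof := by
  classical
  by_contra hcon
  push_neg at hcon
  have hchinf : Cardinal.aleph0 ≤ ch := hkappa.trans hk.le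
  haveI hTne : Nonempty kappa.ord.ToType := by
    rw [Ordinal.toType_nonempty_iff_ne_zero]
    intro h0
    rw [Cardinal.ord_eq_zero] at h0
    rw [h0] at hkappa
    exact absurd hkappa (by simp [Cardinal.aleph0_ne_zero])
  haveI : IsWellOrder ch.ord.ToType (· < ·) := isWellOrder_lt
  haveI : IsWellOrder (ch.ord.cof).ord.ToType (· < ·) := isWellOrder_lt
  have hθreg : (ch.ord.cof).IsRegular := Cardinal.isRegular_cof (Cardinal.isSuccLimit_ord hchinf)
  obtain ⟨B, hBU, hBbase, hBcard⟩ := hch.1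
  -- enumeration of the base by ch.ord.ToType
  have hBeq : #(ch.ord.ToType) = #B := by rw [Cardinal.mk_ord_toType, hBcard]
  obtain ⟨g0⟩ := Cardinal.eq.mp hBeq
  let bb : ch.ord.ToType → Set kappa.ord.ToType := fun x => (g0 x : Set kappa.ord.ToType)
  have hbbB : ∀ x, bb x ∈ B := fun x => (g0 x).2
  have hbbU : ∀ x, bb x ∈ U := fun x => hBU _ (hbbB x)
  have hbbsurj : ∀ b ∈ B, ∃ x, bb x = b := by
    intro b hb
    refine ⟨g0.symm ⟨b, hb⟩, ?_⟩
    simp [bb]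
  -- unbounded family of length cof
  obtain ⟨S, hSunb, hScard⟩ :=
    Order.exists_cof_eq ch.ord.ToType
  rw [Ordinal.cof_toType] at hScard
  have hSeq : #((ch.ord.cof).ord.ToType) = #S := by rw [Cardinal.mk_ord_toType, hScard]
  obtain ⟨g1⟩ := Cardinal.eq.mp hSeq
  let gf : (ch.ord.cof).ord.ToType → ch.ord.ToType := fun i => (g1 i : ch.ord.ToType)
  have hgf : ∀ x : ch.ord.ToType, ∃ i, x ≤ gf i := by
    intro x
    obtain ⟨b, hbS, hb⟩ := hSunb x
    refine ⟨g1.symm ⟨b, hbS⟩, ?_⟩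
    rw [show gf (g1.symm ⟨b, hbS⟩) = b by simp [gf]]
    exact hb
  -- choice of the sets X i
  have hXex : ∀ i : (ch.ord.cof).ord.ToType, ∃ X, X ∈ U ∧
      ∀ β, β ≤ gf i → ¬ AlmostSub (bb β) X := by
    intro i
    by_contra hno
    push_neg at hno
    set DD := Set.range
      (fun p : Set.Iic (gf i) × kappa.ord.ToType => bb p.1.1 ∩ Set.Ioi p.2) with hDD
    have hDU : ∀ d ∈ DD, d ∈ U := by
      rintro d ⟨p, rfl⟩
      exact Filter.inter_mem (hbbU _) (tail_mem_uniform p.2)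
    have hDbase : ∀ Y ∈ U, ∃ d ∈ DD, d ⊆ Y := by
      intro Y hY
      obtain ⟨β, hβ, hAS⟩ := hno Y hY
      obtain ⟨c, hc⟩ := hAS
      refine ⟨bb β ∩ Set.Ioi c, ⟨(⟨β, hβ⟩, c), rfl⟩, ?_⟩
      intro x hx
      by_contra hxY
      exact absurd (hc ⟨hx.1, hxY⟩) (not_le.2 hx.2)
    have hchle : ch ≤ #DD := hch.2 ⟨DD, hDU, hDbase, rfl⟩
    have hlt : #DD < ch := by
      calc #DD ≤ #(Set.Iic (gf i) × kappa.ord.ToType) := Cardinal.mk_range_le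
        _ = #(Set.Iic (gf i)) * kappa := by
            rw [Cardinal.mk_prod, Cardinal.mk_ord_toType]; simp
        _ < ch := Cardinal.mul_lt_of_lt hchinf (card_Iic_lt (gf i)) hk
    exact absurd hchle (not_le.2 hlt)
  choose X hXU hXnot using hXex
  -- pseudo-intersection principle below dp
  have pint : ∀ μ : Cardinal, μ.IsRegular → μ < dp →
      ∀ E : μ.ord.ToType → Set kappa.ord.ToType, (∀ k, E k ∈ U) →
      (∀ k l, k < l → AlmostSub (E l) (E k)) → ∃ P ∈ U, ∀ k, AlmostSub P (E k) := by
    intro μ hreg hlt E hEU hEdec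
    by_contra hno
    exact absurd (hdp.2 ⟨hreg, E, hEU, hEdec, hno⟩) (not_le.2 hlt)
  -- the recursion
  let G : ∀ i : (ch.ord.cof).ord.ToType,
      (∀ j, j < i → Set kappa.ord.ToType) → Set kappa.ord.ToType := fun i rec =>
    if h : ∃ Q, Q ∈ U ∧ ∀ j (hj : j < i), AlmostSub Q (rec j hj) then h.choose ∩ X i else ∅
  let D : (ch.ord.cof).ord.ToType → Set kappa.ord.ToType :=
    (IsWellFounded.wf
      (r := ((· < ·) : (ch.ord.cof).ord.ToType → (ch.ord.cof).ord.ToType → Prop))).fix G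
  have hDeq : ∀ i, D i = G i (fun j _ => D j) := fun i => WellFounded.fix_eq _ G i
  have key : ∀ i, D i ∈ U ∧ D i ⊆ X i ∧ ∀ j (hj : j < i), AlmostSub (D i) (D j) := by
    intro i
    induction i using WellFoundedLT.induction with
    | ind i IH =>
    have hex : ∃ Q, Q ∈ U ∧ ∀ j (hj : j < i), AlmostSub Q (D j) := by
      by_cases hne : ∃ j, j < i
      · by_cases hmax : ∃ m, m < i ∧ ∀ j, j < i → j ≤ m
        · obtain ⟨m, hmi, hm⟩ := hmax
          refine ⟨D m, (IH m hmi).1, ?_⟩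
          intro j hj
          rcases lt_or_eq_of_le (hm j hj) with h | h
          · exact (IH m hmi).2.2 j h
          · rw [← h]
            exact almostSub_of_subset (subset_refl _)
        · -- limit case
          push_neg at hmax
          obtain ⟨j₀, hj₀⟩ := hne
          set o := Ordinal.typein
            ((· < ·) : (ch.ord.cof).ord.ToType → (ch.ord.cof).ord.ToType → Prop) i with ho
          have holim : Order.IsSuccLimit o := by
            rw [Ordinal.isSuccLimit_iff, Order.isSuccPrelimit_iff_succ_lt]
            constructor
            · intro h0
              have hlt0 : Ordinal.typein ((· < ·)) j₀ < o :=
                (Ordinal.typein_lt_typein _).2 hj₀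
              rw [h0] at hlt0
              exact absurd hlt0 (fun h => not_lt_zero h)
            · intro a ha
              have halt : a < Ordinal.type
                  ((· < ·) : (ch.ord.cof).ord.ToType → (ch.ord.cof).ord.ToType → Prop) :=
                ha.trans (Ordinal.typein_lt_type _ i)
              set j := Ordinal.enum ((· < ·)) ⟨a, halt⟩ with hj
              have hji : j < i := (Ordinal.typein_lt_typein _).1
                (by rw [hj, Ordinal.typein_enum]; exact ha)
              obtain ⟨j', hj'i, hjj'⟩ := hmax j hji
              have h1 : a < Ordinal.typein ((· < ·)) j' := by
                rw [show a = Ordinal.typein ((· < ·)) j by rw [hj, Ordinal.typein_enum]]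
                exact (Ordinal.typein_lt_typein _).2 hjj'
              exact lt_of_le_of_lt (Order.succ_le_of_lt h1) ((Ordinal.typein_lt_typein _).2 hj'i)
          have hμreg := Cardinal.isRegular_cof holim
          have hμlt : o.cof < dp :=
            lt_trans (lt_of_le_of_lt (Ordinal.cof_le_card o)
              (Cardinal.card_typein_toType_lt (ch.ord.cof) i)) hcon
          haveI : IsWellOrder o.cof.ord.ToType (· < ·) := isWellOrder_lt
          obtain ⟨fs, hfs⟩ := Ordinal.exists_fundamental_sequence o
          have hfslt : ∀ (b) (hb : b < o.cof.ord), fs b hb < o := fun b hb => hfs.lt hb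
          have htk : ∀ k : o.cof.ord.ToType,
              Ordinal.typein ((· < ·)) k < o.cof.ord := fun k => Ordinal.typein_lt_self k
          set el : o.cof.ord.ToType → (ch.ord.cof).ord.ToType := fun k =>
            Ordinal.enum ((· < ·))
              ⟨fs _ (htk k), lt_trans (hfslt _ _) (Ordinal.typein_lt_type _ i)⟩ with hel
          have hel_typein : ∀ k, Ordinal.typein ((· < ·)) (el k) = fs _ (htk k) := by
            intro k
            rw [hel]
            exact Ordinal.typein_enum _ _
          have hel_lt : ∀ k, el k < i := fun k =>
            (Ordinal.typein_lt_typein _).1 (by rw [hel_typein]; exact hfslt _ _)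
          have hel_mono : ∀ k l : o.cof.ord.ToType, k < l → el k < el l := by
            intro k l hkl
            apply (Ordinal.typein_lt_typein
              ((· < ·) : (ch.ord.cof).ord.ToType → (ch.ord.cof).ord.ToType → Prop)).1
            rw [hel_typein, hel_typein]
            exact hfs.2.1 _ _ ((Ordinal.typein_lt_typein _).2 hkl)
          obtain ⟨Q, hQU, hQ⟩ := pint o.cof hμreg hμlt (fun k => D (el k))
            (fun k => (IH _ (hel_lt k)).1)
            (fun k l hkl => (IH _ (hel_lt l)).2.2 _ (hel_mono k l hkl))
          refine ⟨Q, hQU, ?_⟩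
          intro j hj
          have hjo : Ordinal.typein ((· < ·)) j < o := (Ordinal.typein_lt_typein _).2 hj
          rw [← hfs.2.2] at hjo
          obtain ⟨b, hb, hble⟩ := Ordinal.lt_blsub_iff.mp hjo
          set k := Ordinal.enum ((· < ·) : o.cof.ord.ToType → o.cof.ord.ToType → Prop)
            ⟨b, by rw [Ordinal.type_toType]; exact hb⟩ with hkdef
          have hkb : Ordinal.typein ((· < ·)) k = b := by
            rw [hkdef]; exact Ordinal.typein_enum _ _
          have h2 : Ordinal.typein ((· < ·)) (el k) = fs b hb := by
            rw [hel_typein k]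
            congr 1
          have hjel : j ≤ el k := by
            apply (Ordinal.typein_le_typein' ((ch.ord.cof).ord)).mp
            rw [h2]
            exact hble
          rcases lt_or_eq_of_le hjel with h | h
          · exact (hQ k).trans ((IH _ (hel_lt k)).2.2 j h)
          · rw [h]
            exact hQ k
      · push_neg at hne
        exact ⟨Set.univ, Filter.univ_mem, fun j hj => absurd hj (not_lt.2 (hne j))⟩
    have hDi : D i = hex.choose ∩ X i := by
      rw [hDeq i]
      simp only [G]
      rw [dif_pos hex]
    obtain ⟨hQU, hQall⟩ := hex.choose_spec
    refine ⟨?_, ?_, ?_⟩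
    · rw [hDi]; exact Filter.inter_mem hQU (hXU i)
    · rw [hDi]; exact Set.inter_subset_right
    · intro j hj
      rw [hDi]
      exact AlmostSub.mono Set.inter_subset_left (hQall j hj)
  -- conclusion
  obtain ⟨P, hPU, hP⟩ := pint (ch.ord.cof) hθreg hcon D (fun i => (key i).1)
    (fun i j hij => (key j).2.2 i hij)
  obtain ⟨b, hbB, hbP⟩ := hBbase P hPU
  obtain ⟨x, hx⟩ := hbbsurj b hbB
  obtain ⟨i, hi⟩ := hgf x
  have h1 : AlmostSub (bb x) (D i) := AlmostSub.mono (by rw [hx]; exact hbP) (hP i)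
  have h2 : AlmostSub (bb x) (X i) := h1.trans (almostSub_of_subset (key i).2.1)
  exact hXnot i x hi h2

end Aux

/-- for a uniform ultrafilter `U`, `dp(U) ≤ cf(ch(U))`. -/
theorem stmt_14 (kappa : Cardinal) (hkappa : Cardinal.aleph0 ≤ kappa)
    (U : Ultrafilter kappa.ord.ToType)
    (huniform : ∀ X ∈ U, #X = kappa)
    (ch dp : Cardinal)
    (hch : IsLeast {c : Cardinal | ∃ B : Set (Set kappa.ord.ToType),
      (∀ b ∈ B, b ∈ U) ∧ (∀ X ∈ U, ∃ b ∈ B, b ⊆ X) ∧ #B = c} ch)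
    (hdp : IsLeast {theta : Cardinal | theta.IsRegular ∧
      ∃ B : theta.ord.ToType → Set kappa.ord.ToType, (∀ i, B i ∈ U) ∧
        (∀ i j : theta.ord.ToType, i < j → AlmostSub (B j) (B i)) ∧
        ¬ ∃ P ∈ U, ∀ i, AlmostSub P (B i)} dp) :
    dp ≤ ch.ord.cof := by
  have hk : kappa < ch := kappa_lt_ch hkappa U huniform hch
  exact stmt_14' kappa hkappa U huniform ch dp hch hdp
    (fun i => card_Iic_lt (hkappa.trans hk.le) i)
    (fun c => tail_mem_uniform hkappa U huniform c)
    hk
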